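/- Let f(u) = ln(1+exp(u)), let S = {(x_i,y_i)}_{i=1}^n ⊂ R^d × {±1} with ‖x_i‖ ≤ 1, suppose a unit vector w* satisfies y_i⟨w*,x_i⟩ ≥ γ for all i with γ ≤ 1, and let 0 ≤ α < γ. Let {w_t} be generated by α-SGD with w₀ = 0, an arbitrary index sequence i₀, i₁, … in {1,…,n}, and step sizes η_j ≤ min{1, 2(1+α)^{−2}}. For t ≥ 1 define u_t = (ln(t)/(γ−α))·w*. Then ‖w_t − u_t‖² ≤ ln(t)²/(γ−α)² + 2. -/
import Mathlib


open scoped RealInnerProductSpace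

lemma sigmoid_deriv (s : ℝ) :
    deriv (fun u => Real.log (1 + Real.exp u)) s = Real.exp s / (1 + Real.exp s) := by
  have h1 : HasDerivAt (fun u => 1 + Real.exp u) (Real.exp s) s :=
    (Real.hasDerivAt_exp s).const_add 1
  have h2 := h1.log (by positivity)
  exact h2.deriv

lemma sigmoid_key_bound (C s : ℝ) :
    Real.exp s / (1 + Real.exp s) * (C - s) ≤ Real.exp (C - 1) := by
  have hE : 0 < Real.exp s := Real.exp_pos s
  rcases le_or_gt (C - s) 0 with h | h
  · have : Real.exp s / (1 + Real.exp s) * (C - s) ≤ 0 :=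
      mul_nonpos_of_nonneg_of_nonpos (by positivity) h
    exact this.trans (Real.exp_pos _).le
  · have hσ : Real.exp s / (1 + Real.exp s) ≤ Real.exp s := by
      apply div_le_self hE.le; linarith
    have h1 : C - s ≤ Real.exp (C - s - 1) := by
      have := Real.add_one_le_exp (C - s - 1); linarith
    calc Real.exp s / (1 + Real.exp s) * (C - s)
        ≤ Real.exp s * (C - s) := by nlinarith
      _ ≤ Real.exp s * Real.exp (C - s - 1) := by nlinarith [Real.exp_pos (C - s - 1)]
      _ = Real.exp (C - 1) := by rw [← Real.exp_add]; ring_nf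


lemma step_arith (e g s ip zn T L : ℝ)
    (hg0 : 0 ≤ g) (hg1 : g ≤ 1) (he : 0 < e) (he1 : e ≤ 1)
    (hzn2 : e * zn ^ 2 ≤ 2) (hT : 0 < T)
    (hip : s + L ≤ ip)
    (hq : g * ((1 - L) - s) ≤ 1 / T) :
    -(2 * (e * g) * ip) + (e * g) ^ 2 * zn ^ 2 ≤ 2 / T := by
  have heg : 0 ≤ e * g := by positivity
  have h1 : -(2 * (e * g) * ip) ≤ -(2 * (e * g) * (s + L)) := by
    have := mul_le_mul_of_nonneg_left hip heg
    nlinarith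
  have h2 : (e * g) ^ 2 * zn ^ 2 ≤ 2 * (e * g ^ 2) := by
    have h0 : 0 ≤ e * g ^ 2 := by positivity
    have := mul_le_mul_of_nonneg_left hzn2 h0
    nlinarith
  have h3 : 2 * (e * g ^ 2) ≤ 2 * (e * g) := by nlinarith
  have h4 : 2 * (e * g) * ((1 - L) - s) ≤ 2 / T := by
    have h1t : 0 < 1 / T := by positivity
    rcases le_or_gt (g * ((1 - L) - s)) 0 with h | h
    · have : e * (g * ((1 - L) - s)) ≤ 0 := mul_nonpos_of_nonneg_of_nonpos he.le h
      have h2T : 0 < 2 / T := by positivity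
      nlinarith
    · have : e * (g * ((1 - L) - s)) ≤ 1 * (1 / T) :=
        mul_le_mul he1 hq h.le (by norm_num)
      rw [one_mul] at this
      rw [show (2 : ℝ) / T = 2 * (1 / T) by ring]
      nlinarith
  nlinarith

set_option maxHeartbeats 1000000

/-- for `α`-SGD on the robust logistic loss with `w₀ = 0`, an arbitrary
index sequence, and step sizes `η_j ≤ min{1, 2/(1+α)²}`, setting
`u_t = (ln(t)/(γ−α))·w*`, one has `‖w_t − u_t‖² ≤ ln(t)²/(γ−α)² + 2` for all `t ≥ 1`. -/
theorem alpha_sgd_distance_to_comparator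
    (d n : ℕ) (hn : 0 < n) (x : Fin n → EuclideanSpace ℝ (Fin d)) (y : Fin n → ℝ)
    (hx : ∀ i, ‖x i‖ ≤ 1) (hy : ∀ i, y i = 1 ∨ y i = -1)
    (wstar : EuclideanSpace ℝ (Fin d)) (hwstar : ‖wstar‖ = 1)
    (γ α : ℝ) (hγ1 : γ ≤ 1) (hmargin : ∀ i, γ ≤ y i * ⟪wstar, x i⟫)
    (hα0 : 0 ≤ α) (hαγ : α < γ)
    (η : ℕ → ℝ) (hηpos : ∀ j, 0 < η j) (hη : ∀ j, η j ≤ min 1 (2 / (1 + α) ^ 2))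
    (idx : ℕ → Fin n)
    (w : ℕ → EuclideanSpace ℝ (Fin d)) (hw0 : w 0 = 0)
    (hupd : ∀ j : ℕ, w (j + 1) = w j - η j •
      deriv (fun u => Real.log (1 + Real.exp u))
          ⟪w j, -(y (idx j)) • x (idx j) + α • (‖w j‖⁻¹ • w j)⟫ •
        (-(y (idx j)) • x (idx j) + α • (‖w j‖⁻¹ • w j))) :
    ∀ t : ℕ, 1 ≤ t →
      ‖w t - (Real.log t / (γ - α)) • wstar‖ ^ 2 ≤
        Real.log t ^ 2 / (γ - α) ^ 2 + 2 := by
  intro t ht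
  have hγα : 0 < γ - α := sub_pos.2 hαγ
  have ht' : (1 : ℝ) ≤ (t : ℝ) := by exact_mod_cast ht
  have ht0 : (0 : ℝ) < (t : ℝ) := by linarith
  have hlogt : 0 ≤ Real.log t := Real.log_nonneg ht'
  set c : ℝ := Real.log t / (γ - α) with hc
  have hc0 : 0 ≤ c := div_nonneg hlogt hγα.le
  set u : EuclideanSpace ℝ (Fin d) := c • wstar with hu
  have hnu : ‖u‖ ^ 2 = Real.log t ^ 2 / (γ - α) ^ 2 := by
    rw [hu, norm_smul, hwstar, mul_one, Real.norm_eq_abs, sq_abs, hc, div_pow]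
  -- per-step bound
  have step : ∀ j : ℕ, ‖w (j + 1) - u‖ ^ 2 ≤ ‖w j - u‖ ^ 2 + 2 / t := by
    intro j
    set i := idx j with hi
    set z : EuclideanSpace ℝ (Fin d) :=
      -(y i) • x i + α • (‖w j‖⁻¹ • w j) with hz
    set s : ℝ := ⟪w j, z⟫ with hs
    set g : ℝ := Real.exp s / (1 + Real.exp s) with hg
    have hexps : 0 < Real.exp s := Real.exp_pos s
    have hg0 : 0 ≤ g := by positivity
    have hg1 : g ≤ 1 := by
      rw [hg, div_le_one (by positivity)]; linarith
    have hηj := hηpos j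
    have hη1 : η j ≤ 1 := (hη j).trans (min_le_left _ _)
    have hη2 : η j * (1 + α) ^ 2 ≤ 2 := by
      have h2 := (hη j).trans (min_le_right _ _)
      have hpos : (0 : ℝ) < (1 + α) ^ 2 := by positivity
      calc η j * (1 + α) ^ 2 ≤ 2 / (1 + α) ^ 2 * (1 + α) ^ 2 := by nlinarith
        _ = 2 := by field_simp
    -- norm of z
    have hybar : ‖(‖w j‖⁻¹ • w j : EuclideanSpace ℝ (Fin d))‖ ≤ 1 := by
      rcases eq_or_ne (w j) 0 with h | h
      · simp [h]
      · rw [norm_smul, norm_inv, norm_norm, inv_mul_cancel₀ (norm_ne_zero_iff.2 h)]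
    have hzn : ‖z‖ ≤ 1 + α := by
      have hyi : |y i| = 1 := by rcases hy i with h | h <;> simp [h]
      calc ‖z‖ ≤ ‖(-(y i)) • x i‖ + ‖α • (‖w j‖⁻¹ • w j)‖ := norm_add_le _ _
        _ = |y i| * ‖x i‖ + |α| * ‖(‖w j‖⁻¹ • w j : EuclideanSpace ℝ (Fin d))‖ := by
            rw [norm_smul, norm_smul, Real.norm_eq_abs, Real.norm_eq_abs, abs_neg]
        _ ≤ 1 * 1 + α * 1 := by
            rw [hyi, abs_of_nonneg hα0]
            nlinarith [hx i, hybar, norm_nonneg (x i)]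
        _ = 1 + α := by ring
    -- inner product with wstar
    have hwz : ⟪wstar, z⟫ ≤ -γ + α := by
      rw [hz, inner_add_right, inner_smul_right, inner_smul_right]
      have h1 : (⟪wstar, x i⟫ : ℝ) * (-(y i)) = -(y i * ⟪wstar, x i⟫) := by ring
      have h2 : -(y i) * ⟪wstar, x i⟫ ≤ -γ := by
        have := hmargin i; linarith
      have h3 : (⟪wstar, ‖w j‖⁻¹ • w j⟫ : ℝ) ≤ 1 := by
        calc (⟪wstar, ‖w j‖⁻¹ • w j⟫ : ℝ) ≤ ‖wstar‖ * ‖(‖w j‖⁻¹ • w j : EuclideanSpace ℝ (Fin d))‖ :=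
              real_inner_le_norm _ _
          _ ≤ 1 := by rw [hwstar, one_mul]; exact hybar
      have h4 : α * ⟪wstar, ‖w j‖⁻¹ • w j⟫ ≤ α := by nlinarith
      linarith
    -- rewrite the update
    have hupd' : w (j + 1) = (w j - u) - (η j * g) • z + u := by
      rw [hupd j, ← hi, ← hz, sigmoid_deriv, ← hs, ← hg, smul_smul]
      abel
    have hexp : ‖w (j + 1) - u‖ ^ 2 =
        ‖w j - u‖ ^ 2 - 2 * (η j * g) * ⟪w j - u, z⟫ + (η j * g) ^ 2 * ‖z‖ ^ 2 := by
      rw [hupd']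
      have : (w j - u) - (η j * g) • z + u - u = (w j - u) - (η j * g) • z := by abel
      rw [this, norm_sub_sq_real, real_inner_smul_right, norm_smul,
        Real.norm_eq_abs, mul_pow, sq_abs]
      ring
    have hinner : (⟪w j - u, z⟫ : ℝ) = s - c * ⟪wstar, z⟫ := by
      rw [inner_sub_left, hu, real_inner_smul_left, ← hs]
    -- bound pieces
    have hca : c * (-γ + α) = -Real.log t := by
      rw [hc]; field_simp; ring
    have hq : g * ((1 - Real.log t) - s) ≤ 1 / t := by
      have := sigmoid_key_bound (1 - Real.log t) s
      have he : Real.exp (1 - Real.log t - 1) = 1 / t := by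
        rw [show (1 : ℝ) - Real.log t - 1 = -Real.log t by ring, Real.exp_neg,
          Real.exp_log ht0, one_div]
      rw [← hg] at this
      linarith [this, he.le, he.ge]
    have hczle : c * ⟪wstar, z⟫ ≤ -Real.log t := by
      calc c * ⟪wstar, z⟫ ≤ c * (-γ + α) := mul_le_mul_of_nonneg_left hwz hc0
        _ = -Real.log t := hca
    have hip : s + Real.log t ≤ ⟪w j - u, z⟫ := by
      rw [hinner]; linarith
    have hzn2 : η j * ‖z‖ ^ 2 ≤ 2 := by
      have hzsq : ‖z‖ ^ 2 ≤ (1 + α) ^ 2 := by nlinarith [norm_nonneg z]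
      nlinarith
    have key := step_arith (η j) g s (⟪w j - u, z⟫) ‖z‖ (t : ℝ) (Real.log t)
      hg0 hg1 hηj hη1 hzn2 ht0 hip hq
    rw [hexp]
    linarith
  -- induction
  have main : ∀ k : ℕ, ‖w k - u‖ ^ 2 ≤ ‖u‖ ^ 2 + 2 * k / t := by
    intro k
    induction k with
    | zero => simp [hw0]
    | succ k ih =>
      have := step k
      have hcast : ((k + 1 : ℕ) : ℝ) = (k : ℝ) + 1 := by push_cast; ring
      calc ‖w (k + 1) - u‖ ^ 2 ≤ ‖w k - u‖ ^ 2 + 2 / t := step k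
        _ ≤ ‖u‖ ^ 2 + 2 * k / t + 2 / t := by linarith
        _ = ‖u‖ ^ 2 + 2 * ((k : ℝ) + 1) / t := by ring
        _ = ‖u‖ ^ 2 + 2 * ((k + 1 : ℕ) : ℝ) / t := by rw [hcast]
  have := main t
  have hfin : 2 * (t : ℝ) / t = 2 := by field_simp
  rw [hnu] at this
  linarith [this, hfin.le, hfin.ge]
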